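/- Let κ be regular uncountable, and let D = {S ⊆ κ : S ∪ {δ < κ : cf(δ) < θ} contains a club of κ}, where θ < κ is a regular uncountable cardinal with |α|^{<θ} < κ for all α < κ. Then D is a normal filter on κ and {δ < κ : cf(δ) ≥ θ} ∈ D, hence D has the Δ-system θ-property. -/

import Mathlib

universe u

/-- `C` is a closed unbounded subset of the ordinal `κ`. -/
def IsClubIn (C : Set Ordinal.{u}) (κ : Ordinal.{u}) : Prop :=
  C ⊆ Set.Iio κ ∧ (∀ γ < κ, ∃ β ∈ C, γ < β ∧ β < κ) ∧
    ∀ δ < κ, 0 < δ → (∀ γ < δ, ∃ β ∈ C, γ < β ∧ β < δ) → δ ∈ C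

namespace Stmt14Aux

open Cardinal Set Ordinal

variable {κ : Cardinal.{u}}

theorem club_Iio (huncκ : ℵ₀ < κ) : IsClubIn (Set.Iio κ.ord) κ.ord := by
  have hl : Order.IsSuccLimit κ.ord := Cardinal.isSuccLimit_ord huncκ.le
  refine ⟨le_refl _, fun γ hγ => ⟨γ + 1, hl.add_one_lt hγ, Order.lt_succ γ, hl.add_one_lt hγ⟩,
    fun δ hδ _ _ => hδ⟩

theorem club_tail {E : Set Ordinal.{u}} {γ₀ : Ordinal.{u}} (hE : IsClubIn E κ.ord)
    (hγ : γ₀ < κ.ord) : IsClubIn (E ∩ {β | γ₀ < β}) κ.ord := by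
  obtain ⟨hsub, hunb, hcl⟩ := hE
  refine ⟨fun x hx => hsub hx.1, fun γ hγ' => ?_, fun δ hδ h0 hlim => ?_⟩
  · obtain ⟨β, hβE, hβγ, hβκ⟩ := hunb (max γ γ₀) (max_lt hγ' hγ)
    exact ⟨β, ⟨hβE, (le_max_right γ γ₀).trans_lt hβγ⟩, (le_max_left γ γ₀).trans_lt hβγ, hβκ⟩
  · obtain ⟨β, hβ, _, hβδ⟩ := hlim 0 h0
    refine ⟨hcl δ hδ h0 (fun γ hγ' => ?_), hβ.2.trans hβδ⟩
    obtain ⟨β', hβ', h1, h2⟩ := hlim γ hγ'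
    exact ⟨β', hβ'.1, h1, h2⟩

end Stmt14Aux

namespace Stmt14Aux
open Cardinal Set Ordinal

theorem club_diag (hregκ : κ.IsRegular) (huncκ : ℵ₀ < κ) (E : Ordinal.{u} → Set Ordinal.{u})
    (hE : ∀ γ < κ.ord, IsClubIn (E γ) κ.ord) :
    IsClubIn {δ | δ < κ.ord ∧ ∀ γ < δ, δ ∈ E γ} κ.ord := by
  have hcof : (κ.ord).cof = κ := hregκ.cof_eq
  have hl : Order.IsSuccLimit κ.ord := Cardinal.isSuccLimit_ord hregκ.aleph0_le
  -- a choice function picking elements of E ξ above β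
  have hpick : ∀ ξ β : Ordinal.{u}, ∃ e, (ξ < κ.ord → β < κ.ord → e ∈ E ξ ∧ β < e ∧ e < κ.ord) := by
    intro ξ β
    by_cases h : ξ < κ.ord ∧ β < κ.ord
    · obtain ⟨e, he, h1, h2⟩ := (hE ξ h.1).2.1 β h.2
      exact ⟨e, fun _ _ => ⟨he, h1, h2⟩⟩
    · exact ⟨0, fun h1 h2 => absurd ⟨h1, h2⟩ h⟩
  choose pick hpick' using hpick
  constructor
  · exact fun x hx => hx.1
  constructor
  · -- unboundedness
    intro γ₀ hγ₀
    -- iterate: s (n+1) = sup of picks below s n, plus one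
    set s : ℕ → Ordinal.{u} := fun n => Nat.rec (γ₀ + 1)
      (fun _ sn => (⨆ x : (sn).ToType, pick (((Ordinal.ToType.mk (o := sn))).symm x).1 sn) + 1) n with hs
    have hstep : ∀ n, s (n + 1) =
        (⨆ x : (s n).ToType, pick (((Ordinal.ToType.mk (o := (s n)))).symm x).1 (s n)) + 1 := fun n => rfl
    have hinv : ∀ n, s n < κ.ord := by
      intro n
      induction n with
      | zero => exact hl.add_one_lt hγ₀
      | succ n ih =>
        rw [hstep]
        refine hl.add_one_lt (Ordinal.iSup_lt_ord ?_ ?_)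
        · rw [Cardinal.mk_toType, hcof]
          exact Cardinal.lt_ord.mp ih
        · intro x
          exact (hpick' _ _ ((((Ordinal.ToType.mk (o := (s n)))).symm x).2.trans ih) ih).2.2
    have hmono : ∀ n, s n < s (n + 1) := by
      intro n
      have h0 : (0 : Ordinal) < s n := by
        cases n with
        | zero => exact lt_of_le_of_lt (zero_le (a := γ₀)) (lt_add_one γ₀)
        | succ m => rw [hstep]; exact lt_of_le_of_lt zero_le (lt_add_one _)
      rw [hstep]
      have hx : ∃ x : (s n).ToType, (((Ordinal.ToType.mk (o := (s n)))).symm x).1 = 0 := by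
        refine ⟨(Ordinal.ToType.mk (o := (s n))) ⟨0, h0⟩, by simp⟩
      obtain ⟨x, hx⟩ := hx
      have : pick (((Ordinal.ToType.mk (o := (s n)))).symm x).1 (s n) ≤
          ⨆ x : (s n).ToType, pick (((Ordinal.ToType.mk (o := (s n)))).symm x).1 (s n) :=
        le_ciSup (Ordinal.bddAbove_range _) x
      have h2 : s n < pick (((Ordinal.ToType.mk (o := (s n)))).symm x).1 (s n) := by
        have := hpick' (((Ordinal.ToType.mk (o := (s n)))).symm x).1 (s n)
          ((((Ordinal.ToType.mk (o := (s n)))).symm x).2.trans (hinv n)) (hinv n)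
        exact this.2.1
      exact lt_of_lt_of_le (h2.trans_le this) (le_of_lt (lt_add_one _))
    set δ : Ordinal.{u} := ⨆ n, s n with hδ
    have hsle : ∀ n, s n ≤ δ := fun n => le_ciSup (Ordinal.bddAbove_range _) n
    have hslt : ∀ n, s n < δ := fun n => lt_of_lt_of_le (hmono n) (hsle (n+1))
    have hδκ : δ < κ.ord := by
      refine Ordinal.iSup_lt_ord_lift ?_ hinv
      simpa [hcof] using huncκ
    have hsmono : ∀ m n, m ≤ n → s m ≤ s n := by
      intro m n h
      exact (strictMono_nat_of_lt_succ hmono).monotone h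
    have hfind : ∀ γ < δ, ∃ n, γ < s n := by
      intro γ hγ
      by_contra h
      push_neg at h
      exact absurd (ciSup_le h) (not_le_of_gt hγ)
    refine ⟨δ, ⟨hδκ, fun γ hγ => ?_⟩, ?_, hδκ⟩
    · -- δ ∈ E γ by closedness of E γ
      have hγκ : γ < κ.ord := hγ.trans hδκ
      have h0δ : (0:Ordinal) < δ := lt_of_le_of_lt zero_le ((lt_add_one γ₀).trans_le ((hsle 0).trans (le_refl _)))
      refine (hE γ hγκ).2.2 δ hδκ h0δ ?_
      intro γ' hγ'
      obtain ⟨n₁, hn₁⟩ := hfind γ hγ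
      obtain ⟨n₂, hn₂⟩ := hfind γ' hγ'
      set N := max n₁ n₂ with hN
      have hγN : γ < s N := hn₁.trans_le (hsmono _ _ (le_max_left _ _))
      have hγ'N : γ' < s N := hn₂.trans_le (hsmono _ _ (le_max_right _ _))
      set x := (Ordinal.ToType.mk (o := (s N))) ⟨γ, hγN⟩ with hx
      have hxv : (((Ordinal.ToType.mk (o := (s N)))).symm x).1 = γ := by simp [hx]
      set β := pick (((Ordinal.ToType.mk (o := (s N)))).symm x).1 (s N) with hβ
      have hsup : β ≤ ⨆ y : (s N).ToType, pick (((Ordinal.ToType.mk (o := (s N)))).symm y).1 (s N) :=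
        le_ciSup (Ordinal.bddAbove_range _) x
      have hβδ : β < δ := lt_of_le_of_lt (hsup.trans (le_of_lt (lt_add_one _)))
        (by rw [← hstep]; exact hslt (N+1))
      have hp := hpick' (((Ordinal.ToType.mk (o := (s N)))).symm x).1 (s N)
        (((((Ordinal.ToType.mk (o := (s N)))).symm x)).2.trans (hinv N)) (hinv N)
      rw [hxv] at hp
      exact ⟨β, by rw [hβ, hxv]; exact hp.1, hγ'N.trans (by rw [hβ, hxv]; exact hp.2.1), hβδ⟩
    · exact lt_of_lt_of_le (lt_add_one γ₀) (hsle 0)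
  · -- closedness
    intro δ hδκ h0δ hlim
    refine ⟨hδκ, fun γ hγ => ?_⟩
    refine (hE γ (hγ.trans hδκ)).2.2 δ hδκ h0δ ?_
    intro γ' hγ'
    obtain ⟨β, hβ, hβ1, hβ2⟩ := hlim (max γ γ') (max_lt hγ hγ')
    exact ⟨β, hβ.2 γ ((le_max_left _ _).trans_lt hβ1), (le_max_right _ _).trans_lt hβ1, hβ2⟩

end Stmt14Aux

namespace Stmt14Aux
open Cardinal Set Ordinal

variable (κ θ : Cardinal.{u})

/-- The small-cofinality part. -/
def low : Set Ordinal.{u} := {δ ∈ Set.Iio κ.ord | δ.cof < θ}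

/-- Positive sets: meet every club in a point of cofinality `≥ θ`. -/
def Pos (S : Set Ordinal.{u}) : Prop :=
  ∀ E, IsClubIn E κ.ord → ∃ δ, δ ∈ E ∩ S ∧ θ ≤ δ.cof

variable {κ θ}

theorem club_inter_sub (hregκ : κ.IsRegular) (huncκ : ℵ₀ < κ)
    {C₁ C₂ : Set Ordinal.{u}} (h₁ : IsClubIn C₁ κ.ord) (h₂ : IsClubIn C₂ κ.ord) :
    ∃ C, IsClubIn C κ.ord ∧ C ⊆ C₁ ∩ C₂ := by
  set E : Ordinal.{u} → Set Ordinal.{u} := fun γ => if γ = 0 then C₁ else C₂ with hE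
  have hCd := club_diag hregκ huncκ E (fun γ _ => by
    by_cases h : γ = 0 <;> simp [hE, h, h₁, h₂])
  have h1κ : (1 : Ordinal) < κ.ord := by
    have := Cardinal.isSuccLimit_ord hregκ.aleph0_le
    exact lt_of_lt_of_le Ordinal.one_lt_omega0 (Ordinal.omega0_le_of_isSuccLimit this)
  refine ⟨_, club_tail hCd h1κ, ?_⟩
  rintro δ ⟨⟨hδκ, hδ⟩, h1δ⟩
  have h0δ : (0:Ordinal) < δ := lt_trans zero_lt_one h1δ
  constructor
  · have := hδ 0 h0δ; simpa [hE] using this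
  · have := hδ 1 h1δ; simpa [hE] using this

theorem pos_iff (hS : S ⊆ Set.Iio κ.ord) :
    (Set.Iio κ.ord \ S ∉ {T | T ⊆ Set.Iio κ.ord ∧ ∃ E, IsClubIn E κ.ord ∧
      E ⊆ T ∪ low κ θ}) ↔ Pos κ θ S := by
  constructor
  · intro h E hEc
    by_contra hco
    push_neg at hco
    refine h ⟨diff_subset, E, hEc, ?_⟩
    intro δ hδ
    have hδκ : δ < κ.ord := hEc.1 hδ
    by_cases hδS : δ ∈ S
    · exact Or.inr ⟨hδκ, hco δ ⟨hδ, hδS⟩⟩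
    · exact Or.inl ⟨hδκ, hδS⟩
  · rintro hp ⟨_, E, hEc, hEsub⟩
    obtain ⟨δ, ⟨hδE, hδS⟩, hδcof⟩ := hp E hEc
    rcases hEsub hδE with h | h
    · exact h.2 hδS
    · exact absurd hδcof (not_le_of_gt h.2)

theorem Pos.mono {S T : Set Ordinal.{u}} (hST : S ⊆ T) (h : Pos κ θ S) : Pos κ θ T := by
  intro E hE
  obtain ⟨δ, ⟨h1, h2⟩, h3⟩ := h E hE
  exact ⟨δ, ⟨h1, hST h2⟩, h3⟩

theorem Pos.nonempty {S : Set Ordinal.{u}} (huncκ : ℵ₀ < κ) (h : Pos κ θ S) :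
    ∃ δ ∈ S, δ < κ.ord ∧ θ ≤ δ.cof := by
  obtain ⟨δ, ⟨h1, h2⟩, h3⟩ := h _ (club_Iio huncκ)
  exact ⟨δ, h2, h1, h3⟩

theorem Pos.club_inter (hregκ : κ.IsRegular) (huncκ : ℵ₀ < κ) {S C : Set Ordinal.{u}}
    (h : Pos κ θ S) (hC : IsClubIn C κ.ord) : Pos κ θ (S ∩ C) := by
  intro E hE
  obtain ⟨C', hC', hsub⟩ := club_inter_sub hregκ huncκ hE hC
  obtain ⟨δ, ⟨h1, h2⟩, h3⟩ := h C' hC'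
  exact ⟨δ, ⟨(hsub h1).1, h2, (hsub h1).2⟩, h3⟩

theorem fodor (hregκ : κ.IsRegular) (huncκ : ℵ₀ < κ) {S : Set Ordinal.{u}}
    (hS : Pos κ θ S) (g : Ordinal.{u} → Ordinal.{u})
    (hg : ∀ δ ∈ S, θ ≤ δ.cof → g δ < δ) :
    ∃ γ, Pos κ θ (S ∩ {δ | g δ = γ}) := by
  by_contra h
  push_neg at h
  have h' : ∀ γ, ∃ E, IsClubIn E κ.ord ∧ ∀ δ, δ ∈ E ∩ (S ∩ {δ | g δ = γ}) → δ.cof < θ := by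
    intro γ
    have := h γ
    rw [Pos] at this
    push_neg at this
    obtain ⟨E, hE1, hE2⟩ := this
    exact ⟨E, hE1, fun δ hδ => hE2 δ hδ⟩
  choose E hEc hEav using h'
  have hCd := club_diag hregκ huncκ E (fun γ _ => hEc γ)
  obtain ⟨δ, ⟨⟨hδκ, hδd⟩, hδS⟩, hδcof⟩ := hS _ hCd
  exact absurd hδcof (not_le_of_gt (hEav (g δ) δ ⟨hδd (g δ) (hg δ hδS hδcof), hδS, rfl⟩))

theorem pos_bound (hregκ : κ.IsRegular) (huncκ : ℵ₀ < κ) {S : Set Ordinal.{u}}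
    (hS : Pos κ θ S) {lam : Ordinal.{u}} (hlam : lam < κ.ord) (c : Ordinal.{u} → Ordinal.{u})
    (hc : ∀ δ ∈ S, c δ < lam) :
    ∃ γ, Pos κ θ (S ∩ {δ | c δ = γ}) := by
  have htail : IsClubIn (Set.Iio κ.ord ∩ {β | lam < β}) κ.ord :=
    club_tail (club_Iio huncκ) hlam
  have hS' : Pos κ θ (S ∩ (Set.Iio κ.ord ∩ {β | lam < β})) :=
    hS.club_inter hregκ huncκ htail
  obtain ⟨γ, hγ⟩ := fodor hregκ huncκ hS' c (fun δ hδ _ => (hc δ hδ.1).trans hδ.2.2)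
  exact ⟨γ, hγ.mono (fun δ hδ => ⟨hδ.1.1, hδ.2⟩)⟩

end Stmt14Aux


open Cardinal Set Ordinal Stmt14Aux

/-- the filter `D = {S ⊆ κ : S ∪ {δ < κ : cf(δ) < θ} contains a
club}` is a normal filter on `κ` concentrating on `{δ : cf(δ) ≥ θ}`, and it
has the Δ-system `θ`-property. -/
theorem stmt14 {V : Type u} (κ θ : Cardinal.{u})
    (hregκ : κ.IsRegular) (huncκ : Cardinal.aleph0 < κ)
    (hregθ : θ.IsRegular) (huncθ : Cardinal.aleph0 < θ) (hθκ : θ < κ)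
    (hsmall : ∀ α : Ordinal.{u}, α < κ.ord → Cardinal.powerlt α.card θ < κ)
    (K : Set Ordinal.{u}) (hK : K = Set.Iio κ.ord)
    (D : Set (Set Ordinal.{u}))
    (hD : D = {T | T ⊆ K ∧ ∃ E, IsClubIn E κ.ord ∧
      E ⊆ T ∪ {δ ∈ K | δ.cof < θ}}) :
    (∀ X ∈ D, ∀ Y, X ⊆ Y → Y ⊆ K → Y ∈ D) ∧
    (∀ X ∈ D, ∀ Y ∈ D, X ∩ Y ∈ D) ∧
    (∀ γ ∈ K, {δ ∈ K | γ < δ} ∈ D) ∧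
    (∀ f : Ordinal.{u} → Set Ordinal.{u}, (∀ γ ∈ K, f γ ∈ D) →
      {δ ∈ K | ∀ γ < δ, δ ∈ f γ} ∈ D) ∧
    ({δ ∈ K | θ ≤ δ.cof} ∈ D) ∧
    (∀ Y ⊆ K, K \ Y ∉ D → ∀ B : Ordinal.{u} → Set V,
      (∀ α ∈ Y, Cardinal.mk (B α) < θ) →
      ∃ Z ⊆ Y, K \ Z ∉ D ∧
        ∃ Bs : Set V, ∀ α ∈ Z, ∀ β ∈ Z, α ≠ β → B α ∩ B β = Bs) := by
  subst hK hD
  have hlow : {δ ∈ Set.Iio κ.ord | δ.cof < θ} = low κ θ := rfl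
  rw [hlow]
  have hl : Order.IsSuccLimit κ.ord := Cardinal.isSuccLimit_ord hregκ.aleph0_le
  refine ⟨?_, ?_, ?_, ?_, ?_, ?_⟩
  · rintro X ⟨hXK, E, hEc, hEs⟩ Y hXY hYK
    exact ⟨hYK, E, hEc, fun δ hδ => (hEs hδ).imp (fun h => hXY h) id⟩
  · rintro X ⟨hXK, E₁, hE₁, hs₁⟩ Y ⟨hYK, E₂, hE₂, hs₂⟩
    obtain ⟨C, hCc, hCs⟩ := club_inter_sub hregκ huncκ hE₁ hE₂
    refine ⟨fun δ hδ => hXK hδ.1, C, hCc, fun δ hδ => ?_⟩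
    rcases hs₁ (hCs hδ).1 with h1 | h1
    · rcases hs₂ (hCs hδ).2 with h2 | h2
      · exact Or.inl ⟨h1, h2⟩
      · exact Or.inr h2
    · exact Or.inr h1
  · intro γ hγ
    refine ⟨fun δ hδ => hδ.1, Set.Iio κ.ord ∩ {β | γ < β},
      club_tail (club_Iio huncκ) hγ, fun δ hδ => Or.inl ⟨hδ.1, hδ.2⟩⟩
  · intro f hf
    have h' : ∀ γ, ∃ E, IsClubIn E κ.ord ∧ (γ < κ.ord → E ⊆ f γ ∪ low κ θ) := by
      intro γ
      by_cases h : γ < κ.ord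
      · obtain ⟨_, E, hEc, hEs⟩ := hf γ h
        exact ⟨E, hEc, fun _ => hEs⟩
      · exact ⟨Set.Iio κ.ord, club_Iio huncκ, fun hc => absurd hc h⟩
    choose E hEc hEs using h'
    refine ⟨fun δ hδ => hδ.1, _, club_diag hregκ huncκ E (fun γ _ => hEc γ), ?_⟩
    rintro δ ⟨hδκ, hδd⟩
    by_cases hcof : δ.cof < θ
    · exact Or.inr ⟨hδκ, hcof⟩
    · refine Or.inl ⟨hδκ, fun γ hγ => ?_⟩
      rcases hEs γ (hγ.trans hδκ) (hδd γ hγ) with h | h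
      · exact h
      · exact absurd h.2 hcof
  · exact ⟨fun δ hδ => hδ.1, Set.Iio κ.ord, club_Iio huncκ, fun δ hδ =>
      (le_or_gt θ δ.cof).imp (fun h => ⟨hδ, h⟩) (fun h => ⟨hδ, h⟩)⟩
  · intro Y hYK hYpos B hB
    classical
    rw [pos_iff hYK] at hYpos
    set S : Set Ordinal.{u} := Y ∩ {δ | θ ≤ δ.cof} with hSdef
    have hSY : S ⊆ Y := Set.inter_subset_left
    have hSpos : Pos κ θ S := by
      intro E hE
      obtain ⟨δ, ⟨h1, h2⟩, h3⟩ := hYpos E hE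
      exact ⟨δ, ⟨h1, h2, h3⟩, h3⟩
    have hSκ : ∀ α ∈ S, α < κ.ord := fun α hα => hYK hα.1
    have hScof : ∀ α ∈ S, θ ≤ α.cof := fun α hα => hα.2
    have hSB : ∀ α ∈ S, #(B α) < θ := fun α hα => hB α hα.1
    -- collect all the relevant elements into one set of size ≤ κ
    set e := (Ordinal.ToType.mk (o := κ.ord)) with he
    set B' : κ.ord.ToType → Set V :=
      fun x => if ((e.symm x : Ordinal) ∈ S) then B (e.symm x) else ∅ with hB'
    set U : Set V := ⋃ x, B' x with hU
    have hBU : ∀ α ∈ S, B α ⊆ U := by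
      intro α hα v hv
      refine Set.mem_iUnion.mpr ⟨e ⟨α, hSκ α hα⟩, ?_⟩
      rw [hB']
      dsimp only
      rw [OrderIso.symm_apply_apply]
      rw [if_pos hα]
      exact hv
    have hUκ : #U ≤ κ := by
      calc #U ≤ #κ.ord.ToType * ⨆ x, #(B' x) := Cardinal.mk_iUnion_le _
        _ ≤ κ * θ := by
            refine mul_le_mul' ?_ ?_
            · rw [Cardinal.mk_toType, Cardinal.card_ord]
            · refine ciSup_le' fun x => ?_
              by_cases h : ((e.symm x : Ordinal) ∈ S)
              · rw [hB']; dsimp only; rw [if_pos h]; exact (hSB _ h).le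
              · rw [hB']; dsimp only; rw [if_neg h]; simp [hregθ.aleph0_le.trans' aleph0_pos.le]
        _ = κ := by
            rw [Cardinal.mul_eq_max hregκ.aleph0_le hregθ.aleph0_le]
            exact max_eq_left hθκ.le
    have hUle : #U ≤ #κ.ord.ToType := by
      rw [Cardinal.mk_toType, Cardinal.card_ord]; exact hUκ
    obtain ⟨emb⟩ := (Cardinal.le_def _ _).mp hUle
    set j : V → Ordinal.{u} :=
      fun v => if h : v ∈ U then (e.symm (emb ⟨v, h⟩) : Ordinal) else κ.ord with hj
    have hjlt : ∀ v ∈ U, j v < κ.ord := by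
      intro v hv
      rw [hj]; dsimp only; rw [dif_pos hv]; exact (e.symm (emb ⟨v, hv⟩)).2
    have hjinj : ∀ v ∈ U, ∀ w ∈ U, j v = j w → v = w := by
      intro v hv w hw h
      rw [hj] at h; dsimp only at h; rw [dif_pos hv, dif_pos hw] at h
      have h2 : emb ⟨v, hv⟩ = emb ⟨w, hw⟩ := e.symm.injective (Subtype.ext h)
      exact congrArg Subtype.val (emb.injective h2)
    -- the sup of the part of `j '' B α` below `α`
    set gval : Ordinal.{u} → Ordinal.{u} :=
      fun α => ⨆ b : (B α : Set V), if j b < α then j b else 0 with hgval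
    have hα0 : ∀ α ∈ S, (0:Ordinal) < α := by
      intro α hα
      rcases eq_zero_or_pos α with h | h
      · exfalso
        have := hScof α hα
        rw [h, Ordinal.cof_zero] at this
        exact absurd this (not_le.mpr (aleph0_pos.trans huncθ))
      · exact h
    have hgval_lt : ∀ α ∈ S, gval α < α := by
      intro α hα
      refine Ordinal.iSup_lt_ord ((hSB α hα).trans_le (hScof α hα)) ?_
      intro b
      split
      · assumption
      · exact hα0 α hα
    have hgval_ge : ∀ α ∈ S, ∀ v, ∀ hv : v ∈ B α, j v < α → j v ≤ gval α := by
      intro α hα v hv hlt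
      have heq : (if j ((⟨v, hv⟩ : (B α : Set V)) : V) < α then j ((⟨v, hv⟩ : (B α : Set V)) : V) else 0) = j v := if_pos hlt
      rw [hgval]
      calc j v = _ := heq.symm
        _ ≤ _ := le_ciSup (Ordinal.bddAbove_range _) (⟨v, hv⟩ : (B α : Set V))
    -- Fodor: stabilize gval
    obtain ⟨ρ, hρpos⟩ := fodor hregκ huncκ hSpos gval (fun δ hδ _ => hgval_lt δ hδ)
    set S₁ := S ∩ {δ | gval δ = ρ} with hS₁
    obtain ⟨δ₁, hδ₁S, hδ₁κ, _⟩ := hρpos.nonempty huncκ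
    have hρlt : ρ < κ.ord := by
      have := hgval_lt δ₁ hδ₁S.1
      rw [hδ₁S.2] at this
      exact this.trans hδ₁κ
    have hρsucc : ρ + 1 < κ.ord := hl.add_one_lt hρlt
    -- coding roots as subsets of the type of `ρ+1`
    set X := (ρ + 1).ToType with hX
    set eρ := (Ordinal.ToType.mk (o := (ρ + 1))) with heρ
    set rcode : Ordinal.{u} → Set X :=
      fun α => {x | ∃ v ∈ B α, j v = (eρ.symm x : Ordinal)} with hrcode
    have hrsmall : ∀ α ∈ S, #(rcode α) < θ := by
      intro α hα
      have hfex : ∀ x : rcode α, ∃ v, v ∈ B α ∧ j v = (eρ.symm x.1 : Ordinal) := by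
        intro x
        obtain ⟨v, hv1, hv2⟩ := x.2
        exact ⟨v, hv1, hv2⟩
      choose fv hfv1 hfv2 using hfex
      have hinj : Function.Injective (fun x : rcode α => (⟨fv x, hfv1 x⟩ : (B α : Set V))) := by
        intro x y hxy
        have h1 : fv x = fv y := congrArg Subtype.val hxy
        have h2 : (eρ.symm x.1 : Ordinal) = (eρ.symm y.1 : Ordinal) := by
          rw [← hfv2 x, ← hfv2 y, h1]
        exact Subtype.ext (eρ.symm.injective (Subtype.ext h2))
      exact (Cardinal.mk_le_of_injective hinj).trans_lt (hSB α hα)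
    -- counting the possible codes
    have card_max : ∀ a b : Ordinal.{u}, (max a b).card = max a.card b.card := by
      intro a b
      rcases le_total a b with h | h
      · rw [max_eq_right h, max_eq_right (Ordinal.card_le_card h)]
      · rw [max_eq_left h, max_eq_left (Ordinal.card_le_card h)]
    set eθ := (Ordinal.ToType.mk (o := θ.ord)) with heθ
    set PP : Set (Set X) := {t | #t < θ} with hPP
    have hPPsub : PP ⊆ ⋃ c : θ.ord.ToType,
        {t : Set X | t ⊆ Set.univ ∧ #t ≤ ((eθ.symm c : Ordinal)).card} := by
      intro t ht
      have h1 : (#t).ord < θ.ord := Cardinal.ord_lt_ord.mpr ht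
      refine Set.mem_iUnion.mpr ⟨eθ ⟨(#t).ord, h1⟩, Set.subset_univ t, ?_⟩
      rw [OrderIso.symm_apply_apply]
      dsimp only
      rw [Cardinal.card_ord]
    have hPPκ : #PP < κ := by
      have h2 : #(⋃ c : θ.ord.ToType,
          {t : Set X | t ⊆ Set.univ ∧ #t ≤ ((eθ.symm c : Ordinal)).card}) ≤
          θ * ((max #X ℵ₀) ^< θ) := by
        calc _ ≤ #θ.ord.ToType * ⨆ c, #({t : Set X | t ⊆ Set.univ ∧ #t ≤ ((eθ.symm c : Ordinal)).card}) := Cardinal.mk_iUnion_le _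
          _ ≤ θ * ((max #X ℵ₀) ^< θ) := by
              refine mul_le_mul' ?_ ?_
              · rw [Cardinal.mk_toType, Cardinal.card_ord]
              · refine ciSup_le' fun c => ?_
                have hb := Cardinal.mk_bounded_subset_le (Set.univ : Set X) ((eθ.symm c : Ordinal)).card
                rw [Cardinal.mk_univ] at hb
                refine le_trans ?_ (le_trans hb ?_)
                · exact le_of_eq (Cardinal.mk_congr (Equiv.refl _))
                · refine Cardinal.le_powerlt _ ?_
                  exact Cardinal.lt_ord.mp (eθ.symm c).2
      have h3 : (max #X ℵ₀) ^< θ < κ := by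
        have hmax : max #X ℵ₀ = (max (ρ + 1) ω).card := by
          rw [card_max, Ordinal.card_omega0, hX, Cardinal.mk_toType]
        rw [hmax]
        refine hsmall _ (max_lt hρsucc ?_)
        exact Cardinal.lt_ord.mpr (by rw [Ordinal.card_omega0]; exact huncκ)
      calc #PP ≤ _ := Cardinal.mk_le_mk_of_subset hPPsub
        _ ≤ θ * ((max #X ℵ₀) ^< θ) := h2
        _ < κ := Cardinal.mul_lt_of_lt hregκ.aleph0_le hθκ h3
    set lam := (#PP).ord with hlam
    have hlamκ : lam < κ.ord := Cardinal.ord_lt_ord.mpr hPPκ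
    have hPPle : #PP ≤ #lam.ToType := by
      rw [Cardinal.mk_toType, hlam, Cardinal.card_ord]
    obtain ⟨embP⟩ := (Cardinal.le_def _ _).mp hPPle
    set elam := (Ordinal.ToType.mk (o := lam)) with helam
    set cP : Ordinal.{u} → Ordinal.{u} := fun α =>
      if h : #(rcode α) < θ then (elam.symm (embP ⟨rcode α, h⟩) : Ordinal) else 0 with hcP
    have hcPlt : ∀ α ∈ S₁, cP α < lam := by
      intro α hα
      rw [hcP]; dsimp only; rw [dif_pos (hrsmall α hα.1)]
      exact (elam.symm _).2
    obtain ⟨γc, hS₂pos⟩ := pos_bound hregκ huncκ hρpos hlamκ cP hcPlt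
    set S₂ := S₁ ∩ {δ | cP δ = γc} with hS₂
    have hrcode_eq : ∀ α ∈ S₂, ∀ β ∈ S₂, rcode α = rcode β := by
      intro α hα β hβ
      have h1 : cP α = cP β := by
        have := hα.2
        have h2 := hβ.2
        simp only [Set.mem_setOf_eq] at this h2
        rw [this, h2]
      rw [hcP] at h1; dsimp only at h1
      rw [dif_pos (hrsmall α hα.1.1), dif_pos (hrsmall β hβ.1.1)] at h1
      have h3 := embP.injective (elam.symm.injective (Subtype.ext h1))
      exact congrArg Subtype.val h3
    -- separation club
    set Fs : Ordinal.{u} → Ordinal.{u} := fun α =>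
      if α ∈ S then (⨆ b : (B α : Set V), if j b < κ.ord then j b else 0) + 1 else 0 with hFs
    have hFsκ : ∀ α, Fs α < κ.ord := by
      intro α
      rw [hFs]; dsimp only
      split
      · next h =>
        refine hl.add_one_lt (Ordinal.iSup_lt_ord ?_ ?_)
        · rw [hregκ.cof_eq]; exact (hSB α h).trans hθκ
        · intro b
          split
          · assumption
          · exact hl.pos
      · exact hl.pos
    have hclubsep := club_diag hregκ huncκ (fun γ => Set.Iio κ.ord ∩ {β | Fs γ < β})
      (fun γ _ => club_tail (club_Iio huncκ) (hFsκ γ))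
    set Δs := {δ | δ < κ.ord ∧ ∀ γ < δ, δ ∈ Set.Iio κ.ord ∩ {β | Fs γ < β}} with hΔs
    have hsep : ∀ δ ∈ Δs, ∀ α ∈ S, α < δ → ∀ v ∈ B α, j v < δ := by
      intro δ hδ α hα hαδ v hv
      have h1 : j v ≤ (⨆ b : (B α : Set V), if j b < κ.ord then j b else 0) := by
        have heq : (if j ((⟨v, hv⟩ : (B α : Set V)) : V) < κ.ord then j ((⟨v, hv⟩ : (B α : Set V)) : V) else 0) = j v :=
          if_pos (hjlt v (hBU α hα hv))
        calc j v = _ := heq.symm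
          _ ≤ _ := le_ciSup (Ordinal.bddAbove_range _) (⟨v, hv⟩ : (B α : Set V))
      have h3 : Fs α < δ := (hδ.2 α hαδ).2
      have h2 : Fs α = (⨆ b : (B α : Set V), if j b < κ.ord then j b else 0) + 1 := by
        rw [hFs]; dsimp only; rw [if_pos hα]
      calc j v ≤ _ := h1
        _ < Fs α := by rw [h2]; exact lt_add_one _
        _ < δ := h3
    set Z := S₂ ∩ Δs with hZdef
    have hZpos : Pos κ θ Z := hS₂pos.club_inter hregκ huncκ hclubsep
    have hZS : Z ⊆ S := fun α hα => hα.1.1.1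
    have hZS₂ : Z ⊆ S₂ := fun α hα => hα.1
    have hZS₁ : Z ⊆ S₁ := fun α hα => hα.1.1
    -- the pairwise intersections are all equal
    have hpair : ∀ γ₁ ∈ Z, ∀ γ₂ ∈ Z, γ₁ < γ₂ → ∀ v, v ∈ B γ₁ → v ∈ B γ₂ → j v ≤ ρ := by
      intro γ₁ h1 γ₂ h2 hlt v hv1 hv2
      have hjδ : j v < γ₂ := hsep γ₂ h2.2 γ₁ (hZS h1) hlt v hv1
      have := hgval_ge γ₂ (hZS h2) v hv2 hjδ
      rwa [(hZS₁ h2).2] at this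
    have hget : ∀ α ∈ Z, ∀ v, v ∈ B α → j v ≤ ρ → ∀ β ∈ Z, v ∈ B β := by
      intro α hα v hv hjρ β hβ
      have hjρ1 : j v < ρ + 1 := lt_of_le_of_lt hjρ (lt_add_one ρ)
      have hx : eρ ⟨j v, hjρ1⟩ ∈ rcode α := by
        rw [hrcode]
        refine ⟨v, hv, ?_⟩
        rw [OrderIso.symm_apply_apply]
      rw [hrcode_eq α (hZS₂ hα) β (hZS₂ hβ)] at hx
      obtain ⟨w, hw1, hw2⟩ := hx
      rw [OrderIso.symm_apply_apply] at hw2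
      have hvw : w = v := hjinj w (hBU β (hZS hβ) hw1) v (hBU α (hZS hα) hv) hw2
      rwa [← hvw]
    set Bs : Set V := {v | ∃ α ∈ Z, ∃ β ∈ Z, α ≠ β ∧ v ∈ B α ∧ v ∈ B β} with hBs
    refine ⟨Z, fun α hα => (hZS hα).1, ?_, Bs, ?_⟩
    · have hZK : Z ⊆ Set.Iio κ.ord := fun α hα => hSκ α (hZS hα)
      exact (pos_iff hZK).mpr hZpos
    · intro α hα β hβ hne
      apply Set.Subset.antisymm
      · intro v hv
        exact ⟨α, hα, β, hβ, hne, hv.1, hv.2⟩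
      · intro v hv
        obtain ⟨γ₁, h1, γ₂, h2, hne', hv1, hv2⟩ := hv
        have hjρ : j v ≤ ρ := by
          rcases hne'.lt_or_gt with h | h
          · exact hpair γ₁ h1 γ₂ h2 h v hv1 hv2
          · exact hpair γ₂ h2 γ₁ h1 h v hv2 hv1
        exact ⟨hget γ₁ h1 v hv1 hjρ α hα, hget γ₁ h1 v hv1 hjρ β hβ⟩
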